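/- Let m' and M be integers with 1 ≤ m' and m' + 1 < M. Then the function f(x) = (x^{m'+1} - x^M) / (1 - x^{M-1}) is strictly increasing on the open interval (0, 1). -/

import Mathlib

open Finset

lemma aux_upper (x : ℝ) (h0 : 0 ≤ x) (h1 : x ≤ 1) (k : ℕ) :
    1 - x ^ k ≤ k * (1 - x) := by
  have h := geom_sum_mul x k
  have e : (∑ i ∈ Finset.range k, x ^ i) * (1 - x) = 1 - x ^ k := by
    linear_combination -h
  have hsum : ∑ i ∈ Finset.range k, x ^ i ≤ (k : ℝ) := by
    calc ∑ i ∈ Finset.range k, x ^ i ≤ ∑ _i ∈ Finset.range k, (1 : ℝ) :=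
          Finset.sum_le_sum fun i _ => pow_le_one₀ h0 h1
      _ = k := by simp
  have := mul_le_mul_of_nonneg_right hsum (by linarith : (0:ℝ) ≤ 1 - x)
  linarith

lemma aux_lower (x : ℝ) (h0 : 0 ≤ x) (h1 : x ≤ 1) (c : ℕ) :
    ((c : ℝ) + 1) * x ^ c * (1 - x) ≤ 1 - x ^ (c + 1) := by
  have h := geom_sum_mul x (c + 1)
  have e : (∑ i ∈ Finset.range (c + 1), x ^ i) * (1 - x) = 1 - x ^ (c + 1) := by
    linear_combination -h
  have hsum : ((c : ℝ) + 1) * x ^ c ≤ ∑ i ∈ Finset.range (c + 1), x ^ i := by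
    calc ((c : ℝ) + 1) * x ^ c = ∑ _i ∈ Finset.range (c + 1), x ^ c := by
          simp [Finset.sum_const, nsmul_eq_mul]
      _ ≤ ∑ i ∈ Finset.range (c + 1), x ^ i :=
          Finset.sum_le_sum fun i hi =>
            pow_le_pow_of_le_one h0 h1 (by simp at hi; omega)
  have := mul_le_mul_of_nonneg_right hsum (by linarith : (0:ℝ) ≤ 1 - x)
  linarith

lemma key_pos (m c : ℕ) (hm : 1 ≤ m) (x : ℝ) (h0 : 0 < x) (h1 : x < 1) :
    0 < (m + 1 : ℝ) - (m + c + 2) * x ^ (c + 1) + c * x ^ (m + 1 + c)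
        + x ^ (m + 2 * c + 2) := by
  have hx0 : (0:ℝ) ≤ x := h0.le
  have hx1 : x ≤ 1 := h1.le
  have hA := aux_lower x hx0 hx1 c
  have hB1 := aux_upper x hx0 hx1 m
  have hB2 := aux_upper x hx0 hx1 (m + 1 + c)
  have hA' : (m + 1 : ℝ) * (((c : ℝ) + 1) * x ^ c * (1 - x))
      ≤ (m + 1) * (1 - x ^ (c + 1)) :=
    mul_le_mul_of_nonneg_left hA (by positivity)
  have hB1' : (c : ℝ) * x ^ (c + 1) * (1 - x ^ m)
      ≤ (c : ℝ) * x ^ (c + 1) * ((m : ℝ) * (1 - x)) :=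
    mul_le_mul_of_nonneg_left hB1 (by positivity)
  have hB2' : x ^ (c + 1) * (1 - x ^ (m + 1 + c))
      ≤ x ^ (c + 1) * (((m + 1 + c : ℕ) : ℝ) * (1 - x)) :=
    mul_le_mul_of_nonneg_left hB2 (by positivity)
  have id1 : x ^ (c + 1) * x ^ m = x ^ (m + 1 + c) := by
    rw [← pow_add]; congr 1; omega
  have id2 : x ^ (c + 1) * x ^ (m + 1 + c) = x ^ (m + 2 * c + 2) := by
    rw [← pow_add]; congr 1; omega
  have main : (m + 1 : ℝ) - (m + c + 2) * x ^ (c + 1) + c * x ^ (m + 1 + c)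
        + x ^ (m + 2 * c + 2)
      = (m + 1) * (1 - x ^ (c + 1)) - (c : ℝ) * x ^ (c + 1) * (1 - x ^ m)
        - x ^ (c + 1) * (1 - x ^ (m + 1 + c)) := by
    rw [← id1, ← id2]; ring
  have main2 : (m + 1 : ℝ) * (((c : ℝ) + 1) * x ^ c * (1 - x))
        - (c : ℝ) * x ^ (c + 1) * ((m : ℝ) * (1 - x))
        - x ^ (c + 1) * (((m + 1 + c : ℕ) : ℝ) * (1 - x))
      = (m + 1) * ((c : ℝ) + 1) * x ^ c * (1 - x) ^ 2 := by
    push_cast; ring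
  have h1x : (0:ℝ) < 1 - x := by linarith
  have hpos : 0 < ((m : ℝ) + 1) * ((c : ℝ) + 1) * x ^ c * (1 - x) ^ 2 :=
    mul_pos (by positivity) (pow_pos h1x 2)
  push_cast at hB2' main2 ⊢
  linarith [hA', hB1', hB2']

theorem stmt_4 (m' M : ℕ) (hm : 1 ≤ m') (hM : m' + 1 < M) :
    StrictMonoOn (fun x : ℝ => (x ^ (m' + 1) - x ^ M) / (1 - x ^ (M - 1)))
      (Set.Ioo 0 1) := by
  obtain ⟨c, rfl⟩ : ∃ c, M = m' + 2 + c := ⟨M - (m' + 2), by omega⟩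
  have e1 : m' + 2 + c - 1 = m' + 1 + c := by omega
  simp only [e1]
  apply strictMonoOn_of_deriv_pos (convex_Ioo 0 1)
  · apply ContinuousOn.div
    · exact ((continuous_pow _).sub (continuous_pow _)).continuousOn
    · exact (continuous_const.sub (continuous_pow _)).continuousOn
    · intro x hx
      have : x ^ (m' + 1 + c) < 1 := pow_lt_one₀ hx.1.le hx.2 (by omega)
      intro h; linarith [h]
  · intro x hx
    rw [interior_Ioo] at hx
    obtain ⟨hx0, hx1⟩ := hx
    have hlt : x ^ (m' + 1 + c) < 1 := pow_lt_one₀ hx0.le hx1 (by omega)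
    have hden : (1 : ℝ) - x ^ (m' + 1 + c) ≠ 0 := by linarith
    have h1 : HasDerivAt (fun x : ℝ => x ^ (m' + 1) - x ^ (m' + 2 + c))
        (((m' + 1 : ℕ) : ℝ) * x ^ m' - ((m' + 2 + c : ℕ) : ℝ) * x ^ (m' + 1 + c)) x := by
      have a := hasDerivAt_pow (m' + 1) x
      have b := hasDerivAt_pow (m' + 2 + c) x
      have ea : m' + 1 - 1 = m' := by omega
      have eb : m' + 2 + c - 1 = m' + 1 + c := by omega
      rw [ea] at a; rw [eb] at b
      exact a.sub b
    have h2 : HasDerivAt (fun x : ℝ => 1 - x ^ (m' + 1 + c))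
        (0 - ((m' + 1 + c : ℕ) : ℝ) * x ^ (m' + c)) x := by
      have b := hasDerivAt_pow (m' + 1 + c) x
      have eb : m' + 1 + c - 1 = m' + c := by omega
      rw [eb] at b
      exact (hasDerivAt_const x (1 : ℝ)).sub b
    have hD := (h1.div h2 hden).deriv
    simp only [Pi.div_def] at hD
    rw [hD]
    apply div_pos
    · have hg := key_pos m' c hm x hx0 hx1
      have id0 : (((m' + 1 : ℕ) : ℝ) * x ^ m' - ((m' + 2 + c : ℕ) : ℝ) * x ^ (m' + 1 + c))
            * (1 - x ^ (m' + 1 + c))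
            - (x ^ (m' + 1) - x ^ (m' + 2 + c)) * (0 - ((m' + 1 + c : ℕ) : ℝ) * x ^ (m' + c))
          = x ^ m' * ((m' + 1 : ℝ) - (m' + c + 2) * x ^ (c + 1)
            + c * x ^ (m' + 1 + c) + x ^ (m' + 2 * c + 2)) := by
        push_cast
        ring
      rw [id0]
      exact mul_pos (pow_pos hx0 _) hg
    · have h3 : (0:ℝ) < 1 - x ^ (m' + 1 + c) := by linarith
      exact pow_pos h3 2
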